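/- Let I ⊆ 𝔽[x₁,…,x_d] have colength n, let ≺ be a monomial order with initial staircase λ = {λ₁ ≺ ⋯ ≺ λ_n}, and let μ = {μ₁ ≺ ⋯ ≺ μ_n} be any basic set of I (its monomials give a basis of 𝔽[x]/I), listed in increasing ≺-order. Then λ_k ⪯ μ_k for each k = 1,…,n. -/

import Mathlib

set_option synthInstance.maxHeartbeats 1000000
set_option maxHeartbeats 1000000


open MvPolynomial
open scoped MonomialOrder

/-- A staircase of exponent vectors: a downward-closed finite set. -/
def IsStaircaseF {d : ℕ} (l : Finset (Fin d →₀ ℕ)) : Prop :=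
  ∀ u v : Fin d →₀ ℕ, v ∈ l → u ≤ v → u ∈ l

/-- The initial ideal of `I` under a monomial order `m`. -/
noncomputable def initialIdeal {d : ℕ} {F : Type*} [Field F] (m : MonomialOrder (Fin d))
    (I : Ideal (MvPolynomial (Fin d) F)) : Ideal (MvPolynomial (Fin d) F) :=
  Ideal.span {p | ∃ f ∈ I, f ≠ 0 ∧ ∃ u ∈ f.support,
    (∀ v ∈ f.support, v ≼[m] u) ∧ p = monomial u (1 : F)}

/-- The monomial ideal of a staircase `l`. -/
noncomputable def staircaseIdeal {d : ℕ} (F : Type*) [Field F] (l : Finset (Fin d →₀ ℕ)) :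
    Ideal (MvPolynomial (Fin d) F) :=
  Ideal.span {p | ∃ u : Fin d →₀ ℕ, u ∉ l ∧ p = monomial u (1 : F)}

/-- A finite set `s` of exponents is basic for `I` if the span of the corresponding
monomials meets `I` only in `0`. -/
def IsBasic {d : ℕ} {F : Type*} [Field F] (I : Ideal (MvPolynomial (Fin d) F))
    (s : Finset (Fin d →₀ ℕ)) : Prop :=
  ∀ f ∈ Submodule.span F {p | ∃ v ∈ s, p = monomial v (1 : F)}, f ∈ I → f = 0

lemma mk_smul_aux {d : ℕ} {F : Type*} [Field F] (I : Ideal (MvPolynomial (Fin d) F))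
    (c : F) (p : MvPolynomial (Fin d) F) :
    Ideal.Quotient.mk I (c • p) = c • Ideal.Quotient.mk I p := by
  exact map_smul (Ideal.Quotient.mkₐ F I) c p

lemma initialIdeal_eq_span_image {d : ℕ} {F : Type*} [Field F] (m : MonomialOrder (Fin d))
    (I : Ideal (MvPolynomial (Fin d) F)) :
    initialIdeal m I = Ideal.span ((fun u => monomial u (1 : F)) ''
      {u | ∃ f ∈ I, f ≠ 0 ∧ u ∈ f.support ∧ ∀ w ∈ f.support, w ≼[m] u}) := by
  unfold initialIdeal
  congr 1
  ext p
  constructor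
  · rintro ⟨f, hf, hf0, u, hu, hmax, rfl⟩
    exact ⟨u, ⟨f, hf, hf0, hu, hmax⟩, rfl⟩
  · rintro ⟨u, ⟨f, hf, hf0, hu, hmax⟩, rfl⟩
    exact ⟨f, hf, hf0, u, hu, hmax, rfl⟩

/-- Normal form: the class of any monomial lies in the span of the classes of the
staircase monomials that are `≼` it. -/
lemma normal_form {d : ℕ} {F : Type*} [Field F] {I : Ideal (MvPolynomial (Fin d) F)}
    {m : MonomialOrder (Fin d)} {L : Finset (Fin d →₀ ℕ)}
    (hinit : staircaseIdeal F L = initialIdeal m I) (v : Fin d →₀ ℕ) :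
    Ideal.Quotient.mk I (monomial v (1:F)) ∈
      Submodule.span F ((fun w => Ideal.Quotient.mk I (monomial w (1:F))) ''
        {w | w ∈ L ∧ m.toSyn w ≤ m.toSyn v}) := by
  have wfrel : WellFounded (fun a b : (Fin d →₀ ℕ) => m.toSyn a < m.toSyn b) :=
    InvImage.wf m.toSyn IsWellFounded.wf
  refine wfrel.induction
    (C := fun v => Ideal.Quotient.mk I (monomial v (1:F)) ∈
      Submodule.span F ((fun w => Ideal.Quotient.mk I (monomial w (1:F))) ''
        {w | w ∈ L ∧ m.toSyn w ≤ m.toSyn v})) v ?_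
  clear v
  intro v IH
  by_cases hv : v ∈ L
  · exact Submodule.subset_span ⟨v, ⟨hv, le_rfl⟩, rfl⟩
  have hmem : monomial v (1:F) ∈ initialIdeal m I := by
    rw [← hinit]
    exact Ideal.subset_span ⟨v, hv, rfl⟩
  rw [initialIdeal_eq_span_image, mem_ideal_span_monomial_image] at hmem
  obtain ⟨u, ⟨f, hfI, hf0, hus, humax⟩, hle⟩ :=
    hmem v (by rw [mem_support_iff, coeff_monomial]; simp)
  set g : MvPolynomial (Fin d) F := monomial (v - u) (1:F) * f with hg
  have hgI : g ∈ I := Ideal.mul_mem_left _ _ hfI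
  have hvu : v - u + u = v := tsub_add_cancel_of_le hle
  have hc : coeff v g = coeff u f := by
    rw [← hvu, hg, coeff_monomial_mul, one_mul]
  have hcn : coeff v g ≠ 0 := by
    rw [hc]; exact mem_support_iff.mp hus
  have hgmax : ∀ w ∈ g.support, m.toSyn w ≤ m.toSyn v := by
    intro w hw
    have hw' := mem_support_iff.mp hw
    rw [hg, coeff_monomial_mul'] at hw'
    split_ifs at hw' with h1
    · rw [one_mul] at hw'
      have h2 : m.toSyn (w - (v - u)) ≤ m.toSyn u :=
        humax _ (mem_support_iff.mpr hw')
      have h3 : w - (v - u) + (v - u) = w := tsub_add_cancel_of_le h1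
      calc m.toSyn w = m.toSyn (w - (v - u)) + m.toSyn (v - u) := by
            rw [← map_add, h3]
        _ ≤ m.toSyn u + m.toSyn (v - u) := add_le_add h2 le_rfl
        _ = m.toSyn v := by rw [← map_add, add_comm, hvu]
    · exact absurd rfl hw'
  set c : F := coeff v g with hcdef
  set q : MvPolynomial (Fin d) F := monomial v (1:F) - c⁻¹ • g with hq
  have hqv : coeff v q = 0 := by
    rw [hq, coeff_sub, coeff_smul, coeff_monomial, if_pos rfl, smul_eq_mul, ← hcdef,
      inv_mul_cancel₀ hcn, sub_self]
  have hmkq : Ideal.Quotient.mk I (monomial v (1:F)) = Ideal.Quotient.mk I q := by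
    rw [Ideal.Quotient.eq]
    have : monomial v (1:F) - q = c⁻¹ • g := by rw [hq]; ring
    rw [this, smul_eq_C_mul]
    exact Ideal.mul_mem_left _ _ hgI
  rw [hmkq]
  nth_rewrite 1 [q.as_sum]
  rw [map_sum]
  refine Submodule.sum_mem _ ?_
  intro w hw
  have hwv : w ≠ v := by
    intro h; rw [h] at hw; exact mem_support_iff.mp hw hqv
  have hwg : w ∈ g.support := by
    have := mem_support_iff.mp hw
    rw [hq, coeff_sub, coeff_smul, coeff_monomial, if_neg (by exact fun h => hwv h.symm),
      zero_sub, ne_eq, neg_eq_zero, smul_eq_mul] at this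
    rw [mem_support_iff]
    intro h; rw [h, mul_zero] at this; exact this rfl
  have hwlt : m.toSyn w < m.toSyn v :=
    lt_of_le_of_ne (hgmax w hwg) (fun h => hwv (m.toSyn.injective h))
  have hIH := IH w hwlt
  have hmono : Submodule.span F ((fun w' => Ideal.Quotient.mk I (monomial w' (1:F))) ''
        {w' | w' ∈ L ∧ m.toSyn w' ≤ m.toSyn w}) ≤
      Submodule.span F ((fun w' => Ideal.Quotient.mk I (monomial w' (1:F))) ''
        {w' | w' ∈ L ∧ m.toSyn w' ≤ m.toSyn v}) := by
    refine Submodule.span_mono (Set.image_mono ?_)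
    rintro x ⟨hx1, hx2⟩
    exact ⟨hx1, le_trans hx2 (le_of_lt hwlt)⟩
  have heq : Ideal.Quotient.mk I (monomial w (coeff w q)) =
      coeff w q • Ideal.Quotient.mk I (monomial w (1:F)) := by
    rw [show monomial w (coeff w q) = (coeff w q) • monomial w (1:F) by
      rw [smul_monomial, smul_eq_mul, mul_one]]
    exact mk_smul_aux I _ _
  rw [heq]
  exact Submodule.smul_mem _ _ (hmono hIH)

lemma basic_linearIndependent {d : ℕ} {F : Type*} [Field F] {I : Ideal (MvPolynomial (Fin d) F)}
    {n : ℕ} {μ : Fin n → (Fin d →₀ ℕ)} (hinj : Function.Injective μ)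
    (hb : IsBasic I (Finset.image μ Finset.univ)) :
    LinearIndependent F (fun j : Fin n => Ideal.Quotient.mk I (monomial (μ j) (1:F))) := by
  rw [linearIndependent_iff']
  intro s g hsum j hj
  set p : MvPolynomial (Fin d) F := ∑ j' ∈ s, g j' • monomial (μ j') (1:F) with hp
  have hmk : Ideal.Quotient.mk I p =
      ∑ j' ∈ s, g j' • Ideal.Quotient.mk I (monomial (μ j') (1:F)) := by
    rw [hp, map_sum]
    exact Finset.sum_congr rfl fun j' _ => mk_smul_aux I _ _
  have hpI : p ∈ I := by
    rw [← Ideal.Quotient.eq_zero_iff_mem, hmk, hsum]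
  have hps : p ∈ Submodule.span F
      {q | ∃ v ∈ Finset.image μ Finset.univ, q = monomial v (1:F)} := by
    refine Submodule.sum_mem _ fun j' _ => Submodule.smul_mem _ _ (Submodule.subset_span ?_)
    exact ⟨μ j', Finset.mem_image_of_mem μ (Finset.mem_univ j'), rfl⟩
  have hp0 : p = 0 := hb p hps hpI
  have : coeff (μ j) p = g j := by
    rw [hp, coeff_sum]
    simp only [coeff_smul, coeff_monomial, smul_eq_mul, mul_ite, mul_one, mul_zero,
      hinj.eq_iff]
    rw [Finset.sum_ite_eq' s j g, if_pos hj]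
  rw [hp0, coeff_zero] at this
  exact this.symm

/-- Let `I` have colength `n`, let `l : Fin n → ℕ^d` enumerate in strictly increasing
`m`-order the initial staircase of `I` under the monomial order `m`, and let
`μ : Fin n → ℕ^d` enumerate in strictly increasing `m`-order any basic set of `I`.
Then `l k ≼ μ k` for every `k`. -/
theorem initial_staircase_entrywise_le {d n : ℕ} {F : Type*} [Field F]
    (I : Ideal (MvPolynomial (Fin d) F))
    (hlen : Module.finrank F (MvPolynomial (Fin d) F ⧸ I) = n)
    (m : MonomialOrder (Fin d))
    (l : Fin n → (Fin d →₀ ℕ)) (hlmono : StrictMono (fun k => m.toSyn (l k)))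
    (hst : IsStaircaseF (Finset.image l Finset.univ))
    (hlcard : (Finset.image l Finset.univ).card = n)
    (hinit : staircaseIdeal F (Finset.image l Finset.univ) = initialIdeal m I)
    (μ : Fin n → (Fin d →₀ ℕ)) (hμmono : StrictMono (fun k => m.toSyn (μ k)))
    (hμbasic : IsBasic I (Finset.image μ Finset.univ)) :
    ∀ k : Fin n, l k ≼[m] μ k := by
  classical
  have hμinj : Function.Injective μ := fun a b hab => by
    have : m.toSyn (μ a) = m.toSyn (μ b) := congrArg m.toSyn hab
    exact hμmono.injective this
  have hLI := basic_linearIndependent hμinj hμbasic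
  intro k
  by_contra hcon
  rw [not_le] at hcon
  -- hcon : m.toSyn (μ k) < m.toSyn (l k)
  set T : Finset (MvPolynomial (Fin d) F ⧸ I) :=
    Finset.image (fun i => Ideal.Quotient.mk I (monomial (l i) (1:F))) (Finset.Iio k) with hT
  set W : Submodule F (MvPolynomial (Fin d) F ⧸ I) := Submodule.span F (T : Set _) with hW
  have hrange : ∀ j : Fin n, (j : ℕ) ≤ (k : ℕ) →
      Ideal.Quotient.mk I (monomial (μ j) (1:F)) ∈ W := by
    intro j hjk
    have hjle : m.toSyn (μ j) < m.toSyn (l k) := by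
      rcases eq_or_lt_of_le hjk with h | h
      · have : j = k := Fin.ext h
        rw [this]; exact hcon
      · exact lt_trans (hμmono (show j < k from h)) hcon
    have hnf := normal_form hinit (μ j)
    refine Submodule.span_le.mpr ?_ hnf
    rintro x ⟨w, ⟨hwL, hwle⟩, rfl⟩
    obtain ⟨i, _, rfl⟩ := Finset.mem_image.mp hwL
    have hik : i < k := by
      have : m.toSyn (l i) < m.toSyn (l k) := lt_of_le_of_lt hwle hjle
      exact hlmono.lt_iff_lt.mp this
    exact Submodule.subset_span (Finset.mem_image_of_mem _ (Finset.mem_Iio.mpr hik))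
  have hkn : (k : ℕ) + 1 ≤ n := k.isLt
  set f1 : Fin ((k : ℕ) + 1) → (MvPolynomial (Fin d) F ⧸ I) :=
    fun j => Ideal.Quotient.mk I (monomial (μ (Fin.castLE hkn j)) (1:F)) with hf1
  have hf1LI : LinearIndependent F f1 :=
    hLI.comp (Fin.castLE hkn) (Fin.castLE_injective hkn)
  have hf1W : ∀ j, f1 j ∈ W := fun j => hrange (Fin.castLE hkn j) (Nat.lt_succ_iff.mp j.isLt)
  set f2 : Fin ((k : ℕ) + 1) → W := fun j => ⟨f1 j, hf1W j⟩ with hf2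
  have hf2LI : LinearIndependent F f2 := by
    apply LinearIndependent.of_comp W.subtype
    have : W.subtype ∘ f2 = f1 := rfl
    rw [this]; exact hf1LI
  have hcard : (k : ℕ) + 1 ≤ Module.finrank F W := by
    have := hf2LI.fintype_card_le_finrank
    simpa using this
  have hfr : Module.finrank F W ≤ (k : ℕ) := by
    calc Module.finrank F W ≤ T.card := finrank_span_finset_le_card T
      _ ≤ (Finset.Iio k).card := Finset.card_image_le
      _ = (k : ℕ) := by simpa using Fin.card_Iio k
  omega
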